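/- Let Ω be a generic corner with parameter μ and let κ ∈ (0,1). For every admissible phase indicator χ on Ω with 0 < V < ∞ and M := {x ∈ Ω : χ₁(x)+χ₂(x)+χ₃(x) = 1}, there exists an at most countable family of balls B(x_i,r_i) such that: (1) the balls B(x_i,r_i) are pairwise disjoint and contained in Ω; (2) |M \ ∪_i B(x_i, 15μ⁻¹ r_i)| = 0; (3) (1/10)|B(x_i, κ r_i)| ≤ ∫_{B(x_i, κ r_i)} (χ₁+χ₂+χ₃) dx ≤ (9/10)|B(x_i, κ r_i)| for every i. -/

import Mathlib

noncomputable section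

open MeasureTheory Metric Set

/-- ℝ³ as a Euclidean space. -/
abbrev E3 : Type := EuclideanSpace ℝ (Fin 3)

/-- Construct a vector of ℝ³ from its three coordinates. -/
def v3 (x y z : ℝ) : E3 := WithLp.toLp 2 ![x, y, z]

/-- The Euclidean dot product on ℝ³. -/
def dot3 (u v : E3) : ℝ := ∑ i : Fin 3, u i * v i

/-- The cross product on ℝ³. -/
def cross3 (u v : E3) : E3 :=
  v3 (u 1 * v 2 - u 2 * v 1) (u 2 * v 0 - u 0 * v 2) (u 0 * v 1 - u 1 * v 0)

/-- Divergence of a vector field on ℝ³. -/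
def divg (φ : E3 → E3) (x : E3) : ℝ :=
  ∑ i : Fin 3, fderiv ℝ φ x (EuclideanSpace.single i 1) i

/-- The set of test values defining the total variation of `χ` on `Ω`:
values `∫_Ω χ div φ` for `φ` a C¹ vector field compactly supported in `Ω` with `‖φ‖ ≤ 1`. -/
def tvSet (Ω : Set E3) (χ : E3 → ℝ) : Set ℝ :=
  {v : ℝ | ∃ φ : E3 → E3, ContDiff ℝ 1 φ ∧ HasCompactSupport φ ∧ tsupport φ ⊆ Ω ∧
      (∀ x, ‖φ x‖ ≤ 1) ∧ v = ∫ x in Ω, χ x * divg φ x}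

/-- The total variation `∫_Ω |∇χ|`. -/
def totalVariation (Ω : Set E3) (χ : E3 → ℝ) : ℝ := sSup (tvSet Ω χ)

/-- `χ ∈ BV(Ω, {0,1})`. -/
def IsBVIndicator (Ω : Set E3) (χ : E3 → ℝ) : Prop :=
  Measurable χ ∧ (∀ x, χ x = 0 ∨ χ x = 1) ∧ BddAbove (tvSet Ω χ)

/-- An admissible phase indicator `χ = (χ₁, χ₂, χ₃)`:
each `χᵢ ∈ BV(Ω, {0,1})` and `χ₁ + χ₂ + χ₃ ≤ 1`. -/
def AdmissiblePhase (Ω : Set E3) (χ : Fin 3 → E3 → ℝ) : Prop :=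
  (∀ i, IsBVIndicator Ω (χ i)) ∧ ∀ x, χ 0 x + χ 1 x + χ 2 x ≤ 1

/-- The volume `V = ∫_Ω (χ₁ + χ₂ + χ₃)` of the martensitic inclusion. -/
def phaseVolume (Ω : Set E3) (χ : Fin 3 → E3 → ℝ) : ℝ :=
  ∫ x in Ω, (χ 0 x + χ 1 x + χ 2 x)

/-- Squared Frobenius norm of a 3×3 matrix. -/
def frobSq (A : Matrix (Fin 3) (Fin 3) ℝ) : ℝ := ∑ i : Fin 3, ∑ j : Fin 3, (A i j) ^ 2

/-- Symmetric part `e(A) = (A + Aᵀ)/2` of a matrix. -/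
def matSym (A : Matrix (Fin 3) (Fin 3) ℝ) : Matrix (Fin 3) (Fin 3) ℝ :=
  (2⁻¹ : ℝ) • (A + A.transpose)

/-- The symmetrized gradient `e(u) = (∇u + ∇uᵀ)/2` of a displacement `u`. -/
def symGrad (u : E3 → E3) (x : E3) : Matrix (Fin 3) (Fin 3) ℝ :=
  Matrix.of fun i j =>
    (fderiv ℝ u x (EuclideanSpace.single j 1) i + fderiv ℝ u x (EuclideanSpace.single i 1) j) / 2

/-- Stress-free strain of the first martensite variant. -/
def em1 : Matrix (Fin 3) (Fin 3) ℝ := Matrix.diagonal ![-2, 1, 1]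

/-- Stress-free strain of the second martensite variant. -/
def em2 : Matrix (Fin 3) (Fin 3) ℝ := Matrix.diagonal ![1, -2, 1]

/-- Stress-free strain of the third martensite variant. -/
def em3 : Matrix (Fin 3) (Fin 3) ℝ := Matrix.diagonal ![1, 1, -2]

/-- The three stress-free strains of martensite. -/
def strains : Fin 3 → Matrix (Fin 3) (Fin 3) ℝ := ![em1, em2, em3]

/-- `Σᵢ χᵢ e⁽ⁱ⁾`. -/
def phaseStrain (χ : Fin 3 → E3 → ℝ) (x : E3) : Matrix (Fin 3) (Fin 3) ℝ :=
  ∑ i : Fin 3, χ i x • strains i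

/-- A (Sobolev-type) admissibility class for displacements: `u` and `∇u` are square
integrable on `Ω` and `u` is a.e. differentiable. Stands in for `H¹(Ω, ℝ³)`. -/
def IsH1 (Ω : Set E3) (u : E3 → E3) : Prop :=
  AEStronglyMeasurable u (volume.restrict Ω) ∧
  (∀ᵐ x ∂(volume.restrict Ω), DifferentiableAt ℝ u x) ∧
  IntegrableOn (fun x => ‖u x‖ ^ 2) Ω ∧
  IntegrableOn (fun x => ‖fderiv ℝ u x‖ ^ 2) Ω

/-- The elastic integral `∫_Ω |e(u) − Σᵢ χᵢ e⁽ⁱ⁾|² dx`. -/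
def elasticIntegral (Ω : Set E3) (χ : Fin 3 → E3 → ℝ) (u : E3 → E3) : ℝ :=
  ∫ x in Ω, frobSq (symGrad u x - phaseStrain χ x)

/-- The interfacial energy `E_interf[χ] = Σᵢ ∫_Ω |∇χᵢ|`. -/
def interfEnergy (Ω : Set E3) (χ : Fin 3 → E3 → ℝ) : ℝ :=
  ∑ i : Fin 3, totalVariation Ω (χ i)

/-- The elastic energy `E_elast[χ] = inf_{u ∈ H¹} ∫_Ω |e(u) − Σᵢ χᵢ e⁽ⁱ⁾|² dx`. -/
def elastEnergy (Ω : Set E3) (χ : Fin 3 → E3 → ℝ) : ℝ :=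
  sInf {v : ℝ | ∃ u : E3 → E3, IsH1 Ω u ∧ v = elasticIntegral Ω χ u}

/-- The total energy `E[χ] = E_interf[χ] + E_elast[χ]`. -/
def totalEnergy (Ω : Set E3) (χ : Fin 3 → E3 → ℝ) : ℝ :=
  interfEnergy Ω χ + elastEnergy Ω χ

/-- Twin/habit plane normals. -/
def nb12 : E3 := v3 (1 / Real.sqrt 2) (1 / Real.sqrt 2) 0
def nb21 : E3 := v3 (-(1 / Real.sqrt 2)) (1 / Real.sqrt 2) 0
def nb31 : E3 := v3 (1 / Real.sqrt 2) 0 (1 / Real.sqrt 2)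
def nb13 : E3 := v3 (1 / Real.sqrt 2) 0 (-(1 / Real.sqrt 2))
def nb23 : E3 := v3 0 (1 / Real.sqrt 2) (1 / Real.sqrt 2)
def nb32 : E3 := v3 0 (-(1 / Real.sqrt 2)) (1 / Real.sqrt 2)

/-- The corner domain `Ω = {αa + βb + γc : α, β, γ ≥ 0}`. -/
def corner (a b c : E3) : Set E3 :=
  {x | ∃ α β γ : ℝ, 0 ≤ α ∧ 0 ≤ β ∧ 0 ≤ γ ∧ x = α • a + β • b + γ • c}

/-- A generic corner: `a, b, c` are unit vectors in positive order such that the habit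
plane normal `n = b₂₃` cuts off the corner (`a·n, b·n, c·n > 0`). -/
def GenericCorner (a b c : E3) : Prop :=
  ‖a‖ = 1 ∧ ‖b‖ = 1 ∧ ‖c‖ = 1 ∧
  0 < dot3 (cross3 a b) c ∧ 0 < dot3 (cross3 b c) a ∧ 0 < dot3 (cross3 c a) b ∧
  0 < dot3 a nb23 ∧ 0 < dot3 b nb23 ∧ 0 < dot3 c nb23

/-- The parameter `μ` of the corner. -/
def cornerMu (a b c : E3) : ℝ :=
  min (dot3 (‖cross3 a b‖⁻¹ • cross3 a b) c)
    (min (dot3 (‖cross3 b c‖⁻¹ • cross3 b c) a) (dot3 (‖cross3 c a‖⁻¹ • cross3 c a) b))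

/-- `b₃ = (b₂₁ × b₃₂)/|b₂₁ × b₃₂|`. -/
def bb3v : E3 := ‖cross3 nb21 nb32‖⁻¹ • cross3 nb21 nb32

/-- `b₂ = (b₃₂ × b₃)/|b₃₂ × b₃|`. -/
def bb2v : E3 := ‖cross3 nb32 bb3v‖⁻¹ • cross3 nb32 bb3v

/-- `b₁ = (b₃ × b₂₁)/|b₃ × b₂₁|`. -/
def bb1v : E3 := ‖cross3 bb3v nb21‖⁻¹ • cross3 bb3v nb21

/-- The coordinates `yᵢ = x·bᵢ`. -/
def ycoord (i : Fin 3) (x : E3) : ℝ := dot3 x (![bb1v, bb2v, bb3v] i)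

/-- The box `C_R = {−R ≤ y₁ ≤ R, 0 ≤ y₂ ≤ R, 0 ≤ y₃ ≤ R}`. -/
def CRset (R : ℝ) : Set E3 :=
  {x | -R ≤ ycoord 0 x ∧ ycoord 0 x ≤ R ∧ 0 ≤ ycoord 1 x ∧ ycoord 1 x ≤ R ∧
       0 ≤ ycoord 2 x ∧ ycoord 2 x ≤ R}

/-- `C_R⁻ = C_R ∩ {y₁ ≤ 0}`. -/
def CRminus (R : ℝ) : Set E3 := CRset R ∩ {x | ycoord 0 x ≤ 0}

/-- `C_R⁺ = C_R ∩ {y₁ > 0}`. -/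
def CRplus (R : ℝ) : Set E3 := CRset R ∩ {x | 0 < ycoord 0 x}

/-- Matrices of the upper-bound construction. -/
def D1 : Matrix (Fin 3) (Fin 3) ℝ := Matrix.of ![![-2, 2, 0], ![-2, 1, 1], ![0, -1, 1]]
def D2 : Matrix (Fin 3) (Fin 3) ℝ := Matrix.of ![![1, -1, 0], ![1, -2, 1], ![0, -1, 1]]
def DM : Matrix (Fin 3) (Fin 3) ℝ := Matrix.of ![![0, 0, 0], ![0, -1, 1], ![0, -1, 1]]

/-- Tensor product `u ⊗ v` of two vectors. -/
def outer (u v : E3) : Matrix (Fin 3) (Fin 3) ℝ := Matrix.of fun i j => u i * v j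

/-- Symmetrized tensor product `u ⊙ v = (u⊗v + v⊗u)/2`. -/
def symOuter (u v : E3) : Matrix (Fin 3) (Fin 3) ℝ := (2⁻¹ : ℝ) • (outer u v + outer v u)


open RealInnerProductSpace in
lemma inner_eq_dot3 (u v : E3) : ⟪u, v⟫ = dot3 u v := by
  simp [dot3, PiLp.inner_apply, RCLike.inner_apply, conj_trivial]
  exact Finset.sum_congr rfl fun _ _ => mul_comm _ _

lemma dot3_self (v : E3) : dot3 v v = ‖v‖ ^ 2 := by
  rw [← inner_eq_dot3, real_inner_self_eq_norm_sq]

lemma abs_dot3_le (u v : E3) : |dot3 u v| ≤ ‖u‖ * ‖v‖ := by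
  rw [← inner_eq_dot3]; exact abs_real_inner_le_norm u v

lemma dot3_add_right (n u v : E3) : dot3 n (u + v) = dot3 n u + dot3 n v := by
  simp [dot3, Finset.sum_add_distrib, mul_add]

lemma dot3_smul_right (n : E3) (t : ℝ) (u : E3) : dot3 n (t • u) = t * dot3 n u := by
  simp [dot3, Finset.mul_sum, mul_comm, mul_left_comm]

lemma dot3_smul_left (n : E3) (t : ℝ) (u : E3) : dot3 (t • n) u = t * dot3 n u := by
  simp [dot3, Finset.mul_sum, mul_comm, mul_left_comm]
  exact Finset.sum_congr rfl fun _ _ => mul_assoc _ _ _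

lemma cross3_dot_left (u v : E3) : dot3 (cross3 u v) u = 0 := by
  simp [dot3, cross3, v3, Fin.sum_univ_three]; ring

lemma cross3_dot_right (u v : E3) : dot3 (cross3 u v) v = 0 := by
  simp [dot3, cross3, v3, Fin.sum_univ_three]; ring

lemma triple_cyc1 (a b c : E3) : dot3 (cross3 a b) c = dot3 (cross3 b c) a := by
  simp [dot3, cross3, v3, Fin.sum_univ_three]; ring

lemma triple_cyc2 (a b c : E3) : dot3 (cross3 a b) c = dot3 (cross3 c a) b := by
  simp [dot3, cross3, v3, Fin.sum_univ_three]; ring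

lemma cramer3 (a b c y : E3) :
    (dot3 (cross3 a b) c) • y =
      (dot3 (cross3 b c) y) • a + (dot3 (cross3 c a) y) • b + (dot3 (cross3 a b) y) • c := by
  ext i
  fin_cases i <;>
    simp [dot3, cross3, v3, Fin.sum_univ_three, PiLp.add_apply, PiLp.smul_apply, smul_eq_mul] <;>
    ring

lemma dot3_zero_left (u : E3) : dot3 0 u = 0 := by simp [dot3]

lemma corner_smul {a b c x : E3} (hx : x ∈ corner a b c) {t : ℝ} (ht : 0 ≤ t) :
    t • x ∈ corner a b c := by
  obtain ⟨α, β, γ, hα, hβ, hγ, rfl⟩ := hx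
  exact ⟨t * α, t * β, t * γ, mul_nonneg ht hα, mul_nonneg ht hβ, mul_nonneg ht hγ, by
    simp [smul_add, smul_smul]⟩

lemma corner_add {a b c x y : E3} (hx : x ∈ corner a b c) (hy : y ∈ corner a b c) :
    x + y ∈ corner a b c := by
  obtain ⟨α, β, γ, hα, hβ, hγ, rfl⟩ := hx
  obtain ⟨α', β', γ', hα', hβ', hγ', rfl⟩ := hy
  exact ⟨α + α', β + β', γ + γ', by linarith, by linarith, by linarith, by
    simp [add_smul]; abel⟩

lemma mem_corner_iff {a b c : E3} (h1 : 0 < dot3 (cross3 b c) a) (h2 : 0 < dot3 (cross3 c a) b)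
    (h3 : 0 < dot3 (cross3 a b) c) (y : E3) :
    y ∈ corner a b c ↔
      0 ≤ dot3 (cross3 b c) y ∧ 0 ≤ dot3 (cross3 c a) y ∧ 0 ≤ dot3 (cross3 a b) y := by
  constructor
  · rintro ⟨α, β, γ, hα, hβ, hγ, rfl⟩
    refine ⟨?_, ?_, ?_⟩ <;>
      simp only [dot3_add_right, dot3_smul_right, cross3_dot_left, cross3_dot_right,
        mul_zero, add_zero, zero_add] <;>
      positivity
  · rintro ⟨d1, d2, d3⟩
    have hD : dot3 (cross3 a b) c ≠ 0 := ne_of_gt h3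
    refine ⟨dot3 (cross3 b c) y / dot3 (cross3 a b) c,
      dot3 (cross3 c a) y / dot3 (cross3 a b) c,
      dot3 (cross3 a b) y / dot3 (cross3 a b) c,
      div_nonneg d1 h3.le, div_nonneg d2 h3.le, div_nonneg d3 h3.le, ?_⟩
    have hc := cramer3 a b c y
    have := congrArg (fun z => (dot3 (cross3 a b) c)⁻¹ • z) hc
    simp only [smul_add, smul_smul] at this
    rw [inv_mul_cancel₀ hD, one_smul] at this
    simp only [div_eq_inv_mul]
    exact this

lemma norm_cross_pos {a b c : E3} (h3 : 0 < dot3 (cross3 a b) c) : 0 < ‖cross3 a b‖ := by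
  rcases eq_or_ne (cross3 a b) 0 with h | h
  · rw [h, dot3_zero_left] at h3; linarith
  · exact norm_pos_iff.2 h

lemma key_ineq {N u w : E3} {s t μ : ℝ} (hs : 0 < s) (ht : 0 < t) (hNpos : 0 < ‖N‖)
    (hmu : μ ≤ ‖N‖⁻¹ * dot3 N u) (hw : ‖w‖ < μ / s * t) :
    0 ≤ dot3 N (t • (s⁻¹ • u) + w) := by
  rw [dot3_add_right, dot3_smul_right, dot3_smul_right]
  have h1 : ‖N‖ * μ ≤ dot3 N u := by
    have := mul_le_mul_of_nonneg_left hmu hNpos.le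
    rwa [mul_inv_cancel_left₀ (ne_of_gt hNpos)] at this
  have h2 : -dot3 N w ≤ ‖N‖ * ‖w‖ := by
    have := abs_dot3_le N w
    have := neg_abs_le (dot3 N w)
    linarith [abs_dot3_le N w]
  have h3 : ‖N‖ * ‖w‖ < ‖N‖ * (μ / s * t) := by
    exact mul_lt_mul_of_pos_left hw hNpos
  have h4 : t * (s⁻¹ * (‖N‖ * μ)) ≤ t * (s⁻¹ * dot3 N u) := by
    apply mul_le_mul_of_nonneg_left _ ht.le
    apply mul_le_mul_of_nonneg_left h1 (by positivity)
  have : t * (s⁻¹ * (‖N‖ * μ)) = ‖N‖ * (μ / s * t) := by field_simp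
  linarith

lemma dot3_zero_right (u : E3) : dot3 u 0 = 0 := by simp [dot3]

lemma dot3_cont (N : E3) : Continuous fun y : E3 => dot3 N y := by
  have : (fun y : E3 => dot3 N y) = fun y : E3 => (inner ℝ N y : ℝ) :=
    funext fun y => (inner_eq_dot3 N y).symm
  rw [this]
  exact continuous_const.inner continuous_id

lemma norm_normalized {N : E3} (hN : 0 < ‖N‖) : ‖(‖N‖⁻¹ • N)‖ = 1 := by
  rw [norm_smul, Real.norm_eq_abs, abs_inv, abs_norm, inv_mul_cancel₀ (ne_of_gt hN)]

section GC
variable {a b c : E3}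

lemma gc_trip1 (h : GenericCorner a b c) : 0 < dot3 (cross3 a b) c := h.2.2.2.1
lemma gc_trip2 (h : GenericCorner a b c) : 0 < dot3 (cross3 b c) a := h.2.2.2.2.1
lemma gc_trip3 (h : GenericCorner a b c) : 0 < dot3 (cross3 c a) b := h.2.2.2.2.2.1

lemma gc_ncross1 (h : GenericCorner a b c) : 0 < ‖cross3 a b‖ := norm_cross_pos (gc_trip1 h)
lemma gc_ncross2 (h : GenericCorner a b c) : 0 < ‖cross3 b c‖ := norm_cross_pos (gc_trip2 h)
lemma gc_ncross3 (h : GenericCorner a b c) : 0 < ‖cross3 c a‖ := norm_cross_pos (gc_trip3 h)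

lemma cornerMu_eq (a b c : E3) :
    cornerMu a b c = min (‖cross3 a b‖⁻¹ * dot3 (cross3 a b) c)
      (min (‖cross3 b c‖⁻¹ * dot3 (cross3 b c) a) (‖cross3 c a‖⁻¹ * dot3 (cross3 c a) b)) := by
  simp [cornerMu, dot3_smul_left]

lemma mu_pos (h : GenericCorner a b c) : 0 < cornerMu a b c := by
  have h1 := gc_ncross1 h; have h2 := gc_ncross2 h; have h3 := gc_ncross3 h
  have t1 := gc_trip1 h; have t2 := gc_trip2 h; have t3 := gc_trip3 h
  rw [cornerMu_eq]
  exact lt_min (by positivity) (lt_min (by positivity) (by positivity))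

lemma mem_corner_iff' (h : GenericCorner a b c) (y : E3) :
    y ∈ corner a b c ↔
      0 ≤ dot3 (cross3 b c) y ∧ 0 ≤ dot3 (cross3 c a) y ∧ 0 ≤ dot3 (cross3 a b) y :=
  mem_corner_iff (gc_trip2 h) (gc_trip3 h) (gc_trip1 h) y

lemma corner_measurable (h : GenericCorner a b c) : MeasurableSet (corner a b c) := by
  have : corner a b c = {y | 0 ≤ dot3 (cross3 b c) y} ∩
      ({y | 0 ≤ dot3 (cross3 c a) y} ∩ {y | 0 ≤ dot3 (cross3 a b) y}) := by
    ext y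
    simp only [Set.mem_inter_iff, Set.mem_setOf_eq]
    rw [mem_corner_iff' h y]
  rw [this]
  exact (measurableSet_le measurable_const (dot3_cont _).measurable).inter
    ((measurableSet_le measurable_const (dot3_cont _).measurable).inter
      (measurableSet_le measurable_const (dot3_cont _).measurable))

lemma dot_abc_1 (a b c : E3) : dot3 (cross3 a b) (a + b + c) = dot3 (cross3 a b) c := by
  rw [dot3_add_right, dot3_add_right, cross3_dot_left, cross3_dot_right]; ring

lemma dot_abc_2 (a b c : E3) : dot3 (cross3 b c) (a + b + c) = dot3 (cross3 b c) a := by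
  rw [dot3_add_right, dot3_add_right, cross3_dot_left, cross3_dot_right]; ring

lemma dot_abc_3 (a b c : E3) : dot3 (cross3 c a) (a + b + c) = dot3 (cross3 c a) b := by
  rw [dot3_add_right, dot3_add_right, cross3_dot_left, cross3_dot_right]; ring

lemma s_pos (h : GenericCorner a b c) : 0 < ‖a + b + c‖ := by
  rcases eq_or_ne (a + b + c) 0 with h0 | h0
  · have := dot_abc_2 a b c
    rw [h0, dot3_zero_right] at this
    exact absurd this.symm (ne_of_gt (gc_trip2 h))
  · exact norm_pos_iff.2 h0

lemma s_le_3 (h : GenericCorner a b c) : ‖a + b + c‖ ≤ 3 := by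
  calc ‖a + b + c‖ ≤ ‖a‖ + ‖b‖ + ‖c‖ := norm_add₃_le
  _ = 3 := by rw [h.1, h.2.1, h.2.2.1]; norm_num

lemma mu_le_s (h : GenericCorner a b c) : cornerMu a b c ≤ ‖a + b + c‖ := by
  have hn := gc_ncross1 h
  have hone : ‖(‖cross3 a b‖⁻¹ • cross3 a b)‖ = 1 := norm_normalized hn
  have hcs : dot3 (‖cross3 a b‖⁻¹ • cross3 a b) (a + b + c) ≤ ‖a + b + c‖ := by
    have := abs_dot3_le (‖cross3 a b‖⁻¹ • cross3 a b) (a + b + c)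
    rw [hone, one_mul] at this
    exact (le_abs_self _).trans this
  have : cornerMu a b c ≤ ‖cross3 a b‖⁻¹ * dot3 (cross3 a b) c := by
    rw [cornerMu_eq]; exact min_le_left _ _
  calc cornerMu a b c ≤ ‖cross3 a b‖⁻¹ * dot3 (cross3 a b) c := this
  _ = dot3 (‖cross3 a b‖⁻¹ • cross3 a b) (a + b + c) := by
      rw [dot3_smul_left, dot_abc_1]
  _ ≤ ‖a + b + c‖ := hcs

/-- Key geometric fact: the ball of radius `(μ/s)·t` centered at `x + t·e` is in the corner. -/
lemma ball_in_corner (h : GenericCorner a b c) {x : E3} (hx : x ∈ corner a b c) {t : ℝ}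
    (ht : 0 < t) :
    Metric.ball (x + t • (‖a + b + c‖⁻¹ • (a + b + c)))
      (cornerMu a b c / ‖a + b + c‖ * t) ⊆ corner a b c := by
  intro z hz
  set s : ℝ := ‖a + b + c‖ with hs_def
  set μ : ℝ := cornerMu a b c with hμ_def
  have hs : 0 < s := s_pos h
  set e : E3 := s⁻¹ • (a + b + c) with he_def
  set w : E3 := z - (x + t • e) with hw_def
  have hwn : ‖w‖ < μ / s * t := by
    rw [hw_def, ← dist_eq_norm]
    exact Metric.mem_ball.1 hz
  have hz_eq : z = x + (t • e + w) := by rw [hw_def]; abel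
  rw [hz_eq]
  refine corner_add hx ?_
  rw [mem_corner_iff' h]
  have hmu2 : μ ≤ ‖cross3 b c‖⁻¹ * dot3 (cross3 b c) (a + b + c) := by
    rw [dot_abc_2, hμ_def, cornerMu_eq]
    exact (min_le_right _ _).trans (min_le_left _ _)
  have hmu3 : μ ≤ ‖cross3 c a‖⁻¹ * dot3 (cross3 c a) (a + b + c) := by
    rw [dot_abc_3, hμ_def, cornerMu_eq]
    exact (min_le_right _ _).trans (min_le_right _ _)
  have hmu1 : μ ≤ ‖cross3 a b‖⁻¹ * dot3 (cross3 a b) (a + b + c) := by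
    rw [dot_abc_1, hμ_def, cornerMu_eq]
    exact min_le_left _ _
  exact ⟨key_ineq hs ht (gc_ncross2 h) hmu2 hwn,
    key_ineq hs ht (gc_ncross3 h) hmu3 hwn,
    key_ineq hs ht (gc_ncross1 h) hmu1 hwn⟩

end GC

open Filter Topology in
/-- Continuity of `t ↦ |S ∩ B(x+te, ρt)|`. -/
lemma vol_inter_ball_continuousAt (S : Set E3) (hS : MeasurableSet S) (x e : E3) (he : ‖e‖ = 1)
    {ρ : ℝ} (hρ : 0 < ρ) (t0 : ℝ) :
    ContinuousAt (fun t => (volume (S ∩ Metric.ball (x + t • e) (ρ * t))).toReal) t0 := by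
  set p : E3 := x + t0 • e with hp
  set q0 : ℝ := ρ * t0 with hq0
  have hfin : ∀ u : ℝ, volume (S ∩ Metric.ball p u) ≠ ⊤ := fun u =>
    ne_top_of_le_ne_top measure_ball_lt_top.ne (measure_mono Set.inter_subset_right)
  have hsub : ∀ t : ℝ, S ∩ Metric.ball (x + t • e) (ρ * t) ⊆
      S ∩ Metric.ball p (q0 + (1 + ρ) * |t - t0|) := by
    intro t z hz
    refine ⟨hz.1, Metric.mem_ball.2 ?_⟩
    have h1 : dist z (x + t • e) < ρ * t := Metric.mem_ball.1 hz.2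
    have h2 : dist (x + t • e) p = |t - t0| := by
      rw [hp, dist_eq_norm]
      have : x + t • e - (x + t0 • e) = (t - t0) • e := by
        rw [sub_smul]; abel
      rw [this, norm_smul, he, mul_one, Real.norm_eq_abs]
    calc dist z p ≤ dist z (x + t • e) + dist (x + t • e) p := dist_triangle _ _ _
      _ < ρ * t + |t - t0| := by rw [h2]; linarith
      _ ≤ q0 + (1 + ρ) * |t - t0| := by
          have : ρ * t - q0 ≤ ρ * |t - t0| := by
            rw [hq0]
            calc ρ * t - ρ * t0 = ρ * (t - t0) := by ring
              _ ≤ ρ * |t - t0| := by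
                  apply mul_le_mul_of_nonneg_left (le_abs_self _) hρ.le
          nlinarith [abs_nonneg (t - t0)]
  have hsub' : ∀ t : ℝ, S ∩ Metric.ball p (q0 - (1 + ρ) * |t - t0|) ⊆
      S ∩ Metric.ball (x + t • e) (ρ * t) := by
    intro t z hz
    refine ⟨hz.1, Metric.mem_ball.2 ?_⟩
    have h1 : dist z p < q0 - (1 + ρ) * |t - t0| := Metric.mem_ball.1 hz.2
    have h2 : dist p (x + t • e) = |t - t0| := by
      rw [hp, dist_eq_norm]
      have : x + t0 • e - (x + t • e) = (t0 - t) • e := by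
        rw [sub_smul]; abel
      rw [this, norm_smul, he, mul_one, Real.norm_eq_abs, abs_sub_comm]
    have h3 : q0 - ρ * t ≤ ρ * |t - t0| := by
      rw [hq0]
      calc ρ * t0 - ρ * t = ρ * (t0 - t) := by ring
        _ ≤ ρ * |t - t0| := by
            rw [abs_sub_comm]
            exact mul_le_mul_of_nonneg_left (le_abs_self _) hρ.le
    calc dist z (x + t • e) ≤ dist z p + dist p (x + t • e) := dist_triangle _ _ _
      _ < q0 - (1 + ρ) * |t - t0| + |t - t0| := by rw [h2]; linarith
      _ ≤ ρ * t := by nlinarith [abs_nonneg (t - t0)]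
  -- limits from above and below
  have heq : volume (S ∩ Metric.closedBall p q0) = volume (S ∩ Metric.ball p q0) := by
    apply le_antisymm
    · calc volume (S ∩ Metric.closedBall p q0)
          ≤ volume ((S ∩ Metric.ball p q0) ∪ Metric.sphere p q0) := by
            apply measure_mono
            intro z hz
            rcases lt_or_eq_of_le (Metric.mem_closedBall.1 hz.2) with hlt | heq
            · exact Or.inl ⟨hz.1, Metric.mem_ball.2 hlt⟩
            · exact Or.inr (Metric.mem_sphere.2 heq)
        _ ≤ volume (S ∩ Metric.ball p q0) + volume (Metric.sphere p q0) := measure_union_le _ _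
        _ = volume (S ∩ Metric.ball p q0) := by
            rw [MeasureTheory.Measure.addHaar_sphere, add_zero]
    · exact measure_mono (Set.inter_subset_inter_right _ Metric.ball_subset_closedBall)
  have hup : Tendsto (fun n : ℕ => (volume (S ∩ Metric.ball p (q0 + 1 / (n + 1)))).toReal)
      atTop (𝓝 ((volume (S ∩ Metric.ball p q0)).toReal)) := by
    have hcap : ⋂ n : ℕ, (S ∩ Metric.ball p (q0 + 1 / (n + 1))) = S ∩ Metric.closedBall p q0 := by
      ext z
      simp only [Set.mem_iInter, Set.mem_inter_iff, Metric.mem_ball, Metric.mem_closedBall]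
      constructor
      · intro hz
        refine ⟨(hz 0).1, ?_⟩
        by_contra hlt
        push_neg at hlt
        obtain ⟨n, hn⟩ := exists_nat_one_div_lt (sub_pos.2 hlt)
        have := (hz n).2
        linarith
      · intro hz n
        have h0 : (0:ℝ) < 1 / (n + 1) := by positivity
        exact ⟨hz.1, by linarith [hz.2]⟩
    have htd : Tendsto (fun n : ℕ => volume (S ∩ Metric.ball p (q0 + 1 / (n + 1)))) atTop
        (𝓝 (volume (S ∩ Metric.ball p q0))) := by
      rw [← heq, ← hcap]
      apply tendsto_measure_iInter_atTop
      · exact fun n => (hS.inter measurableSet_ball).nullMeasurableSet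
      · intro n m hnm
        apply Set.inter_subset_inter_right
        apply Metric.ball_subset_ball
        have h1 : (n:ℝ) + 1 ≤ (m:ℝ) + 1 := by
          have : (n:ℝ) ≤ m := Nat.cast_le.2 hnm
          linarith
        have := one_div_le_one_div_of_le (by positivity : (0:ℝ) < (n:ℝ) + 1) h1
        linarith
      · exact ⟨0, hfin _⟩
    exact (ENNReal.tendsto_toReal (hfin q0)).comp htd
  have hdown : Tendsto (fun n : ℕ => (volume (S ∩ Metric.ball p (q0 - 1 / (n + 1)))).toReal)
      atTop (𝓝 ((volume (S ∩ Metric.ball p q0)).toReal)) := by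
    have hcup : ⋃ n : ℕ, (S ∩ Metric.ball p (q0 - 1 / (n + 1))) = S ∩ Metric.ball p q0 := by
      ext z
      simp only [Set.mem_iUnion, Set.mem_inter_iff, Metric.mem_ball]
      constructor
      · rintro ⟨n, hzS, hzb⟩
        have h0 : (0:ℝ) < 1 / (n + 1) := by positivity
        exact ⟨hzS, by linarith⟩
      · rintro ⟨hzS, hzb⟩
        obtain ⟨n, hn⟩ := exists_nat_one_div_lt (sub_pos.2 hzb)
        exact ⟨n, hzS, by linarith⟩
    have htd : Tendsto (fun n : ℕ => volume (S ∩ Metric.ball p (q0 - 1 / (n + 1)))) atTop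
        (𝓝 (volume (S ∩ Metric.ball p q0))) := by
      rw [← hcup]
      apply tendsto_measure_iUnion_atTop
      intro n m hnm
      apply Set.inter_subset_inter_right
      apply Metric.ball_subset_ball
      have h1 : (n:ℝ) + 1 ≤ (m:ℝ) + 1 := by
        have : (n:ℝ) ≤ m := Nat.cast_le.2 hnm
        linarith
      have := one_div_le_one_div_of_le (by positivity : (0:ℝ) < (n:ℝ) + 1) h1
      linarith
    exact (ENNReal.tendsto_toReal (hfin q0)).comp htd
  -- epsilon-delta
  rw [Metric.continuousAt_iff]
  intro ε hε
  set G0 : ℝ := (volume (S ∩ Metric.ball p q0)).toReal with hG0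
  have h1 : ∀ᶠ n : ℕ in atTop,
      (volume (S ∩ Metric.ball p (q0 + 1 / (n + 1)))).toReal < G0 + ε / 2 :=
    hup.eventually_lt_const (by linarith)
  have h2 : ∀ᶠ n : ℕ in atTop,
      G0 - ε / 2 < (volume (S ∩ Metric.ball p (q0 - 1 / (n + 1)))).toReal :=
    hdown.eventually_const_lt (by linarith)
  obtain ⟨N, hN1, hN2⟩ := (h1.and h2).exists
  refine ⟨(1 / (N + 1)) / (1 + ρ), by positivity, ?_⟩
  intro t ht
  have htd : (1 + ρ) * |t - t0| < 1 / (N + 1) := by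
    rw [Real.dist_eq] at ht
    have h1ρ : (0:ℝ) < 1 + ρ := by linarith
    calc (1 + ρ) * |t - t0| < (1 + ρ) * ((1 / (N + 1)) / (1 + ρ)) :=
          mul_lt_mul_of_pos_left ht h1ρ
      _ = 1 / (N + 1) := by field_simp
  have hub : (volume (S ∩ Metric.ball (x + t • e) (ρ * t))).toReal <
      G0 + ε / 2 := by
    refine lt_of_le_of_lt ?_ hN1
    apply ENNReal.toReal_mono (hfin _)
    refine measure_mono ((hsub t).trans ?_)
    apply Set.inter_subset_inter_right
    apply Metric.ball_subset_ball
    linarith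
  have hlb : G0 - ε / 2 < (volume (S ∩ Metric.ball (x + t • e) (ρ * t))).toReal := by
    refine lt_of_lt_of_le hN2 ?_
    apply ENNReal.toReal_mono
    · exact ne_top_of_le_ne_top measure_ball_lt_top.ne (measure_mono Set.inter_subset_right)
    · refine measure_mono (subset_trans ?_ (hsub' t))
      apply Set.inter_subset_inter_right
      apply Metric.ball_subset_ball
      linarith
  rw [Real.dist_eq, abs_sub_lt_iff]
  constructor <;> [skip; skip] <;> linarith

lemma vol_ball_eq (x : E3) {r : ℝ} (hr : 0 ≤ r) :
    volume (Metric.ball x r) = ENNReal.ofReal (r ^ 3) * volume (Metric.ball (0:E3) 1) := by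
  have := MeasureTheory.Measure.addHaar_ball (volume : Measure E3) x hr
  rwa [finrank_euclideanSpace_fin] at this

lemma vol_closedBall_eq (x : E3) {r : ℝ} (hr : 0 ≤ r) :
    volume (Metric.closedBall x r) = ENNReal.ofReal (r ^ 3) * volume (Metric.ball (0:E3) 1) := by
  rw [MeasureTheory.Measure.addHaar_closedBall_eq_addHaar_ball, vol_ball_eq x hr]

lemma vol_ball_toReal (x : E3) {r : ℝ} (hr : 0 ≤ r) :
    (volume (Metric.ball x r)).toReal = r ^ 3 * (volume (Metric.ball (0:E3) 1)).toReal := by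
  rw [vol_ball_eq x hr, ENNReal.toReal_mul, ENNReal.toReal_ofReal (by positivity)]

lemma vol_closedBall_toReal (x : E3) {r : ℝ} (hr : 0 ≤ r) :
    (volume (Metric.closedBall x r)).toReal
      = r ^ 3 * (volume (Metric.ball (0:E3) 1)).toReal := by
  rw [vol_closedBall_eq x hr, ENNReal.toReal_mul, ENNReal.toReal_ofReal (by positivity)]

lemma unitBall_toReal_pos : 0 < (volume (Metric.ball (0:E3) 1)).toReal :=
  ENNReal.toReal_pos (measure_ball_pos volume 0 one_pos).ne'
    measure_ball_lt_top.ne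

private lemma cube_ge {u : ℝ} (hu : 1 ≤ u) : u ≤ u ^ 3 := by
  have h0 : 0 ≤ u := le_trans zero_le_one hu
  have h2 : 1 ≤ u ^ 2 := by nlinarith
  calc u = u * 1 := (mul_one u).symm
    _ ≤ u * u ^ 2 := mul_le_mul_of_nonneg_left h2 h0
    _ = u ^ 3 := by ring

open Filter Topology in
/-- At a density point of `S`, along the ray `x + t e`, there is `t > 0` such that the ball
`B(x + te, ρt)` is half covered by `S`. -/
lemma exists_good_t (S : Set E3) (hS : MeasurableSet S) (hfin : volume S ≠ ⊤)
    (x e : E3) (he : ‖e‖ = 1) {ρ : ℝ} (hρ : 0 < ρ)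
    (hx : Tendsto
      (fun r => volume (S ∩ Metric.closedBall x r) / volume (Metric.closedBall x r))
      (𝓝[>] (0:ℝ)) (𝓝 1)) :
    ∃ t : ℝ, 0 < t ∧
      t ≤ max 1 (2 * (volume S).toReal / (ρ ^ 3 * (volume (Metric.ball (0:E3) 1)).toReal)) ∧
      (volume (S ∩ Metric.ball (x + t • e) (ρ * t))).toReal =
        (volume (Metric.ball (x + t • e) (ρ * t))).toReal / 2 := by
  set Ur : ℝ := (volume (Metric.ball (0:E3) 1)).toReal with hUr
  have hU : 0 < Ur := unitBall_toReal_pos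
  set VS : ℝ := (volume S).toReal with hVS
  have hVS0 : 0 ≤ VS := ENNReal.toReal_nonneg
  set G : ℝ → ℝ := fun t => (volume (S ∩ Metric.ball (x + t • e) (ρ * t))).toReal with hG
  set bp : ℝ → ℝ := fun t => (ρ * t) ^ 3 * Ur with hbp
  have hGle : ∀ t, G t ≤ VS := fun t =>
    ENNReal.toReal_mono hfin (measure_mono Set.inter_subset_left)
  have hΦcont : ContinuousOn (fun t => G t - bp t / 2) (Set.univ : Set ℝ) := by
    apply ContinuousOn.sub
    · intro t _
      exact (vol_inter_ball_continuousAt S hS x e he hρ t).continuousWithinAt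
    · apply ContinuousOn.div_const
      apply Continuous.continuousOn
      continuity
  -- small t with G t > bp t / 2
  obtain ⟨rh, hrh_mem, hrh⟩ :
      ∃ rh : ℝ, rh ∈ Set.Ioi (0:ℝ) ∧
        1 - (ρ / (1 + ρ)) ^ 3 / 2 <
          (volume (S ∩ Metric.closedBall x rh)).toReal
            / (volume (Metric.closedBall x rh)).toReal := by
    have hr2 : Tendsto
        (fun r => (volume (S ∩ Metric.closedBall x r)).toReal
          / (volume (Metric.closedBall x r)).toReal) (𝓝[>] (0:ℝ)) (𝓝 1) := by
      have h0 := (ENNReal.tendsto_toReal ENNReal.one_ne_top).comp hx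
      simp only [ENNReal.toReal_one] at h0
      refine h0.congr fun r => ?_
      simp [Function.comp, ENNReal.toReal_div]
    have hev := hr2.eventually_const_lt (show 1 - (ρ / (1 + ρ)) ^ 3 / 2 < 1 by
      have hl : 0 < (ρ / (1 + ρ)) ^ 3 := by positivity
      linarith)
    exact (eventually_mem_nhdsWithin.and hev).exists
  set lam0 : ℝ := (ρ / (1 + ρ)) ^ 3 with hlam0
  have hlam0pos : 0 < lam0 := by positivity
  set t1 : ℝ := rh / (1 + ρ) with ht1def
  have hrh0 : 0 < rh := hrh_mem
  have ht1 : 0 < t1 := by positivity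
  have hkey : (1 + ρ) * t1 = rh := by rw [ht1def]; field_simp
  have hΦt1 : 0 ≤ G t1 - bp t1 / 2 := by
    set cB := Metric.closedBall x rh with hcB
    have hBsub : Metric.ball (x + t1 • e) (ρ * t1) ⊆ cB := by
      intro z hz
      have h1 : dist z (x + t1 • e) < ρ * t1 := Metric.mem_ball.1 hz
      have h2 : dist (x + t1 • e) x = t1 := by
        rw [dist_eq_norm, add_sub_cancel_left, norm_smul, he, mul_one, Real.norm_eq_abs,
          abs_of_pos ht1]
      rw [hcB, Metric.mem_closedBall]
      calc dist z x ≤ dist z (x + t1 • e) + dist (x + t1 • e) x := dist_triangle _ _ _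
        _ ≤ ρ * t1 + t1 := by rw [h2]; linarith
        _ = rh := by linarith [hkey]
    have hvcB : (volume cB).toReal = rh ^ 3 * Ur := vol_closedBall_toReal x hrh0.le
    have hvcB_pos : 0 < (volume cB).toReal := by rw [hvcB]; positivity
    have hvBs : (volume (Metric.ball (x + t1 • e) (ρ * t1))).toReal = lam0 * (volume cB).toReal := by
      rw [vol_ball_toReal _ (by positivity : (0:ℝ) ≤ ρ * t1), hvcB, hlam0, ht1def]
      have h1ρ : (1:ℝ) + ρ ≠ 0 := by positivity
      field_simp
      ring
    -- S covers most of cB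
    have hcover : (1 - lam0 / 2) * (volume cB).toReal < (volume (S ∩ cB)).toReal := by
      exact (lt_div_iff₀ hvcB_pos).1 hrh
    -- split
    have hfin_cB : volume cB ≠ ⊤ := measure_closedBall_lt_top.ne
    have hfin1 : volume (cB ∩ S) ≠ ⊤ :=
      ne_top_of_le_ne_top hfin_cB (measure_mono Set.inter_subset_left)
    have hfin2 : volume (cB \ S) ≠ ⊤ :=
      ne_top_of_le_ne_top hfin_cB (measure_mono Set.diff_subset)
    have hsplit : (volume (cB ∩ S)).toReal + (volume (cB \ S)).toReal = (volume cB).toReal := by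
      rw [← ENNReal.toReal_add hfin1 hfin2, measure_inter_add_diff cB hS]
    have hinter : (volume (cB ∩ S)).toReal = (volume (S ∩ cB)).toReal := by
      rw [Set.inter_comm]
    have hsub2 : Metric.ball (x + t1 • e) (ρ * t1) ⊆
        (S ∩ Metric.ball (x + t1 • e) (ρ * t1)) ∪ (cB \ S) := by
      intro z hz
      by_cases hzS : z ∈ S
      · exact Or.inl ⟨hzS, hz⟩
      · exact Or.inr ⟨hBsub hz, hzS⟩
    have hub : (volume (Metric.ball (x + t1 • e) (ρ * t1))).toReal ≤
        G t1 + (volume (cB \ S)).toReal := by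
      have h1 : volume (Metric.ball (x + t1 • e) (ρ * t1)) ≤
          volume (S ∩ Metric.ball (x + t1 • e) (ρ * t1)) + volume (cB \ S) :=
        (measure_mono hsub2).trans (measure_union_le _ _)
      have h2 := ENNReal.toReal_mono (a := volume (Metric.ball (x + t1 • e) (ρ * t1)))
        (ENNReal.add_ne_top.2 ⟨ne_top_of_le_ne_top hfin_cB
          (measure_mono (Set.inter_subset_right.trans hBsub)), hfin2⟩) h1
      rwa [ENNReal.toReal_add (ne_top_of_le_ne_top hfin_cB
        (measure_mono (Set.inter_subset_right.trans hBsub))) hfin2] at h2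
    have hbp1 : bp t1 = lam0 * (volume cB).toReal := by
      rw [hbp]
      dsimp only
      rw [← vol_ball_toReal (x + t1 • e) (by positivity : (0:ℝ) ≤ ρ * t1), hvBs]
    rw [hvBs] at hub
    rw [hbp1]
    linarith
  -- large t
  set t2 : ℝ := max t1 (max 1 ((4 * VS + 1) / (ρ ^ 3 * Ur))) with ht2def
  have ht2_1 : (1:ℝ) ≤ t2 := le_trans (le_max_left _ _) (le_max_right _ _)
  have ht2_big : (4 * VS + 1) / (ρ ^ 3 * Ur) ≤ t2 := le_trans (le_max_right _ _) (le_max_right _ _)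
  have hbp2 : 4 * VS + 1 ≤ bp t2 := by
    have h3 : t2 ≤ t2 ^ 3 := cube_ge ht2_1
    have h4 : 4 * VS + 1 ≤ ρ ^ 3 * Ur * t2 := by
      rw [div_le_iff₀ (by positivity)] at ht2_big
      linarith
    calc 4 * VS + 1 ≤ ρ ^ 3 * Ur * t2 := h4
      _ ≤ ρ ^ 3 * Ur * t2 ^ 3 := mul_le_mul_of_nonneg_left h3 (by positivity)
      _ = bp t2 := by rw [hbp]; ring
  have hΦt2 : G t2 - bp t2 / 2 < 0 := by
    have := hGle t2
    linarith
  have ht12 : t1 ≤ t2 := le_max_left _ _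
  have hIcc := intermediate_value_Icc' ht12 (hΦcont.mono (Set.subset_univ _))
  obtain ⟨t, htmem, htΦ⟩ := hIcc (Set.mem_Icc.2 ⟨hΦt2.le, hΦt1⟩)
  simp only [] at htΦ
  have ht0 : 0 < t := lt_of_lt_of_le ht1 htmem.1
  have hbpt : (volume (Metric.ball (x + t • e) (ρ * t))).toReal = bp t := by
    rw [hbp]
    dsimp only
    rw [vol_ball_toReal _ (by positivity : (0:ℝ) ≤ ρ * t)]
  have hG2 : G t = bp t / 2 := by linarith
  refine ⟨t, ht0, ?_, ?_⟩
  · have hb_le : bp t ≤ 2 * VS := by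
      have := hGle t
      linarith
    by_cases h1 : t ≤ 1
    · exact h1.trans (le_max_left _ _)
    · push_neg at h1
      have ht3 : t ≤ t ^ 3 := cube_ge h1.le
      have h5 : ρ ^ 3 * Ur * t ≤ 2 * VS := by
        calc ρ ^ 3 * Ur * t ≤ ρ ^ 3 * Ur * t ^ 3 :=
              mul_le_mul_of_nonneg_left ht3 (by positivity)
          _ = bp t := by rw [hbp]; ring
          _ ≤ 2 * VS := hb_le
      have h6 : t ≤ 2 * VS / (ρ ^ 3 * Ur) := by
        rw [le_div_iff₀ (by positivity)]
        linarith
      exact h6.trans (le_max_right _ _)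
  · rw [hbpt]
    exact hG2


open Filter Topology in
/-- existence of the covering. For every admissible phase indicator on a
generic corner with volume `0 < V < ∞`, there is an at most countable family of balls
which are pairwise disjoint and contained in `Ω`, whose `15μ⁻¹`-enlargements cover the
martensitic region `M` up to a null set, and on each of which (shrunk by `κ`) the
martensite volume fraction lies between `1/10` and `9/10`. -/
theorem covering_exists (a b c : E3) (h : GenericCorner a b c)
    (κ : ℝ) (hκ : κ ∈ Set.Ioo (0 : ℝ) 1)
    (χ : Fin 3 → E3 → ℝ) (hχ : AdmissiblePhase (corner a b c) χ)
    (hV : 0 < phaseVolume (corner a b c) χ)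
    (hVfin : IntegrableOn (fun x => χ 0 x + χ 1 x + χ 2 x) (corner a b c)) :
    ∃ (ι : Type) (_ : Countable ι) (xc : ι → E3) (r : ι → ℝ),
      (∀ i, 0 < r i) ∧
      -- (1) the balls are pairwise disjoint and contained in Ω
      (∀ i j, i ≠ j → Disjoint (ball (xc i) (r i)) (ball (xc j) (r j))) ∧
      (∀ i, ball (xc i) (r i) ⊆ corner a b c) ∧
      -- (2) the enlarged balls cover the martensitic region M up to a null set
      volume ({x ∈ corner a b c | χ 0 x + χ 1 x + χ 2 x = 1} \
          ⋃ i, ball (xc i) (15 * (cornerMu a b c)⁻¹ * r i)) = 0 ∧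
      -- (3) the martensite volume fraction of each ball B(xᵢ, κ rᵢ) is in [1/10, 9/10]
      (∀ i,
        (1 / 10) * (volume (ball (xc i) (κ * r i))).toReal ≤
          (∫ x in ball (xc i) (κ * r i), (χ 0 x + χ 1 x + χ 2 x)) ∧
        (∫ x in ball (xc i) (κ * r i), (χ 0 x + χ 1 x + χ 2 x)) ≤
          (9 / 10) * (volume (ball (xc i) (κ * r i))).toReal) := by
  obtain ⟨hκ0, hκ1⟩ := hκ
  -- basic objects
  set Ω : Set E3 := corner a b c with hΩdef
  have hΩm : MeasurableSet Ω := corner_measurable h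
  set M' : Set E3 := {x : E3 | χ 0 x + χ 1 x + χ 2 x = 1} with hM'def
  have hsum_meas : Measurable fun x => χ 0 x + χ 1 x + χ 2 x :=
    ((hχ.1 0).1.add (hχ.1 1).1).add (hχ.1 2).1
  have hM'm : MeasurableSet M' := hsum_meas (measurableSet_singleton 1)
  set M₀ : Set E3 := M' ∩ Ω with hM₀def
  have hM₀m : MeasurableSet M₀ := hM'm.inter hΩm
  have hf01 : ∀ x, χ 0 x + χ 1 x + χ 2 x = 0 ∨ χ 0 x + χ 1 x + χ 2 x = 1 := by
    intro x
    have hs := hχ.2 x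
    rcases (hχ.1 0).2.1 x with h0 | h0 <;> rcases (hχ.1 1).2.1 x with h1 | h1 <;>
      rcases (hχ.1 2).2.1 x with h2 | h2 <;> simp only [h0, h1, h2] at hs ⊢ <;> norm_num at hs <;> norm_num
  have hind : ∀ x, χ 0 x + χ 1 x + χ 2 x = M'.indicator (fun _ => (1:ℝ)) x := by
    intro x
    by_cases hx : x ∈ M'
    · rw [Set.indicator_of_mem hx]
      exact hx
    · rw [Set.indicator_of_notMem hx]
      rcases hf01 x with h0 | h0
      · exact h0
      · exact absurd h0 hx
  -- M₀ has finite volume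
  have hM₀fin : volume M₀ ≠ ⊤ := by
    have h1 : IntegrableOn (M'.indicator (fun _ => (1:ℝ))) Ω := by
      refine hVfin.congr_fun (fun x _ => hind x) hΩm
    rw [IntegrableOn, integrable_indicator_iff hM'm, IntegrableOn, integrable_const_iff] at h1
    rcases h1 with h1 | h1
    · norm_num at h1
    · have h2 := measure_lt_top ((volume.restrict Ω).restrict M') univ
      rw [Measure.restrict_apply_univ, Measure.restrict_apply' hΩm] at h2
      exact h2.ne
  -- geometry constants
  set μ : ℝ := cornerMu a b c with hμdef
  have hμpos : 0 < μ := mu_pos h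
  set sn : ℝ := ‖a + b + c‖ with hsndef
  have hsn : 0 < sn := s_pos h
  have hsn3 : sn ≤ 3 := s_le_3 h
  have hμsn : μ ≤ sn := mu_le_s h
  set θ : ℝ := μ / sn with hθdef
  have hθpos : 0 < θ := by positivity
  have hθ1 : θ ≤ 1 := by
    rw [hθdef, div_le_one hsn]
    exact hμsn
  set e : E3 := sn⁻¹ • (a + b + c) with hedef
  have he : ‖e‖ = 1 := norm_normalized hsn
  set ρ : ℝ := κ * θ with hρdef
  have hρpos : 0 < ρ := by positivity
  -- density points
  set P : E3 → Prop := fun x => Tendsto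
      (fun rr => volume (M₀ ∩ Metric.closedBall x rr) / volume (Metric.closedBall x rr))
      (𝓝[>] (0:ℝ)) (𝓝 1) with hPdef
  have hae : ∀ᵐ x ∂(volume.restrict M₀), P x :=
    Besicovitch.ae_tendsto_measure_inter_div volume M₀
  set sgood : Set E3 := {x | x ∈ M₀ ∧ P x} with hsgooddef
  have hnull : volume (M₀ \ sgood) = 0 := by
    have h0 : (volume.restrict M₀) {x | ¬ P x} = 0 := by
      rw [MeasureTheory.ae_iff] at hae
      exact hae
    rw [Measure.restrict_apply' hM₀m] at h0
    refine measure_mono_null ?_ h0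
    intro z hz
    exact ⟨fun hP => hz.2 ⟨hz.1, hP⟩, hz.1⟩
  -- choice of good radii
  set Rb : ℝ := max 1 (2 * (volume M₀).toReal /
      (ρ ^ 3 * (volume (Metric.ball (0:E3) 1)).toReal)) with hRbdef
  have hex : ∀ x ∈ sgood, ∃ t : ℝ, 0 < t ∧ t ≤ Rb ∧
      (volume (M₀ ∩ Metric.ball (x + t • e) (ρ * t))).toReal =
        (volume (Metric.ball (x + t • e) (ρ * t))).toReal / 2 := by
    intro x hx
    exact exists_good_t M₀ hM₀m hM₀fin x e he hρpos hx.2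
  classical
  set T : E3 → ℝ := fun x => if hx : x ∈ sgood then (hex x hx).choose else 1 with hTdef
  have hT : ∀ x ∈ sgood, 0 < T x ∧ T x ≤ Rb ∧
      (volume (M₀ ∩ Metric.ball (x + T x • e) (ρ * T x))).toReal =
        (volume (Metric.ball (x + T x • e) (ρ * T x))).toReal / 2 := by
    intro x hx
    have := (hex x hx).choose_spec
    rw [hTdef]
    simp only [dif_pos hx]
    exact this
  -- Vitali covering
  obtain ⟨u, hu_sub, hu_disj, hu_cov⟩ :=
    Vitali.exists_disjoint_subfamily_covering_enlargement_closedBall sgood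
      (fun x => x + T x • e) T Rb (fun x hx => (hT x hx).2.1) 4 (by norm_num)
  have hu_count : u.Countable := by
    apply Set.PairwiseDisjoint.countable_of_nonempty_interior hu_disj
    intro x hx
    exact ⟨x + T x • e, Metric.ball_subset_interior_closedBall
      (Metric.mem_ball_self (hT x (hu_sub hx)).1)⟩
  have : Countable ↥u := hu_count.to_subtype
  refine ⟨↥u, this, fun i => i.1 + T i.1 • e, fun i => θ * T i.1, ?_, ?_, ?_, ?_, ?_⟩
  · intro i
    have := (hT i.1 (hu_sub i.2)).1
    positivity
  · -- disjointness
    intro i j hij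
    have hvne : (i : E3) ≠ (j : E3) := fun hv => hij (Subtype.ext hv)
    have hd := hu_disj i.2 j.2 hvne
    have hi := (hT i.1 (hu_sub i.2)).1
    have hj := (hT j.1 (hu_sub j.2)).1
    refine hd.mono ?_ ?_
    · exact Metric.ball_subset_closedBall.trans
        (Metric.closedBall_subset_closedBall (show θ * T i.1 ≤ T i.1 by nlinarith))
    · exact Metric.ball_subset_closedBall.trans
        (Metric.closedBall_subset_closedBall (show θ * T j.1 ≤ T j.1 by nlinarith))
  · -- inside the corner
    intro i
    have hx : (i:E3) ∈ M₀ := (hu_sub i.2).1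
    have := ball_in_corner h hx.2 (hT i.1 (hu_sub i.2)).1
    exact this
  · -- covering
    have hMeq : {x ∈ Ω | χ 0 x + χ 1 x + χ 2 x = 1} = M₀ := by
      ext z
      simp only [Set.mem_setOf_eq, hM₀def, Set.mem_inter_iff, hM'def]
      exact and_comm
    rw [hMeq]
    refine measure_mono_null ?_ hnull
    intro z hz
    refine ⟨hz.1, fun hzs => hz.2 ?_⟩
    obtain ⟨y, hyu, hyb⟩ := hu_cov z hzs
    have hzb : z ∈ Metric.closedBall (z + T z • e) (T z) := by
      rw [Metric.mem_closedBall, dist_eq_norm]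
      have : z - (z + T z • e) = (-(T z)) • e := by
        rw [neg_smul]; abel
      rw [this, norm_smul, he, mul_one, Real.norm_eq_abs, abs_neg,
        abs_of_pos (hT z hzs).1]
    have hz4 : z ∈ Metric.closedBall (y + T y • e) (4 * T y) := hyb hzb
    refine Set.mem_iUnion.2 ⟨⟨y, hyu⟩, ?_⟩
    rw [Metric.mem_ball]
    have hd4 : dist z (y + T y • e) ≤ 4 * T y := Metric.mem_closedBall.1 hz4
    have hTy : 0 < T y := (hT y (hu_sub hyu)).1
    have hgt : 4 * T y < 15 * μ⁻¹ * (θ * T y) := by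
      have h15 : 15 * μ⁻¹ * (θ * T y) = 15 / sn * T y := by
        rw [hθdef]
        field_simp
      rw [h15]
      have h5 : (5:ℝ) ≤ 15 / sn := by
        rw [le_div_iff₀ hsn]
        linarith
      nlinarith
    exact lt_of_le_of_lt hd4 hgt
  · -- density bounds
    intro i
    have hTi := hT i.1 (hu_sub i.2)
    have hrad : κ * (θ * T i.1) = ρ * T i.1 := by rw [hρdef]; ring
    set B : Set E3 := Metric.ball ((i:E3) + T i.1 • e) (κ * (θ * T i.1)) with hBdef
    have hBrw : B = Metric.ball ((i:E3) + T i.1 • e) (ρ * T i.1) := by rw [hBdef, hrad]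
    have hBsub : B ⊆ Ω := by
      rw [hBdef]
      refine (Metric.ball_subset_ball ?_).trans (ball_in_corner h ((hu_sub i.2).1).2 hTi.1)
      rw [show cornerMu a b c / ‖a + b + c‖ = θ from rfl]
      nlinarith [mul_pos hθpos hTi.1]
    have hint : (∫ x in B, (χ 0 x + χ 1 x + χ 2 x)) = (volume (M₀ ∩ B)).toReal := by
      rw [MeasureTheory.integral_congr_ae (MeasureTheory.ae_of_all _ fun x => hind x)]
      rw [MeasureTheory.setIntegral_indicator hM'm]
      rw [MeasureTheory.setIntegral_const]
      rw [smul_eq_mul, mul_one]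
      have hseteq : B ∩ M' = M₀ ∩ B := by
        ext z
        simp only [Set.mem_inter_iff, hM₀def]
        constructor
        · rintro ⟨hz1, hz2⟩
          exact ⟨⟨hz2, hBsub hz1⟩, hz1⟩
        · rintro ⟨⟨hz1, _⟩, hz2⟩
          exact ⟨hz2, hz1⟩
      rw [hseteq]
      rfl
    have hhalf : (volume (M₀ ∩ B)).toReal = (volume B).toReal / 2 := by
      rw [hBrw]
      exact hTi.2.2
    have hpos : 0 ≤ (volume B).toReal := ENNReal.toReal_nonneg
    constructor
    · rw [hint, hhalf]
      linarith
    · rw [hint, hhalf]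
      linarith


end
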